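/- Let f : ℂ → ℂ be square integrable with respect to the Gaussian measure dμ(w) = (1/π) exp(−|w|²) dA(w). Then the Berezin transform B(f) is continuously differentiable on ℂ (as a function of the real coordinates), and for every z ∈ ℂ: (∂/∂z) B(f)(z) = B(conj(w)·f)(z) − conj(z)·B(f)(z), and (∂/∂conj(z)) B(f)(z) = B(w·f)(z) − z·B(f)(z), where B(conj(w)·f)(z) = (1/π)∫_ℂ exp(−|z−w|²)·conj(w)·f(w) dA(w) and B(w·f)(z) = (1/π)∫_ℂ exp(−|z−w|²)·w·f(w) dA(w) (both integrals converge absolutely). -/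

import Mathlib

open Complex ComplexConjugate MeasureTheory

/-- The Gaussian measure `dμ(w) = (1/π)·exp(−|w|²) dA(w)` on `ℂ`. -/
noncomputable def gaussianMeasure : Measure ℂ :=
  volume.withDensity fun w => ENNReal.ofReal (Real.exp (-‖w‖ ^ 2) / Real.pi)

/-- The Berezin transform `B(f)(z) = (1/π)∫_ℂ exp(−|z−w|²) f(w) dA(w)`. -/
noncomputable def berezin (f : ℂ → ℂ) (z : ℂ) : ℂ :=
  (1 / (Real.pi : ℂ)) * ∫ w : ℂ, Complex.exp (-((‖z - w‖ : ℂ) ^ 2)) * f w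

/-- The Wirtinger derivative `∂f/∂z = (1/2)(∂f/∂x − i·∂f/∂y)` of `f : ℂ → ℂ`. -/
noncomputable def wirtingerDeriv (f : ℂ → ℂ) (z : ℂ) : ℂ :=
  (fderiv ℝ f z 1 - Complex.I * fderiv ℝ f z Complex.I) / 2

/-- The conjugate Wirtinger derivative `∂f/∂conj z = (1/2)(∂f/∂x + i·∂f/∂y)`. -/
noncomputable def wirtingerDerivBar (f : ℂ → ℂ) (z : ℂ) : ℂ :=
  (fderiv ℝ f z 1 + Complex.I * fderiv ℝ f z Complex.I) / 2

section BerezinAux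
open Metric
noncomputable def Ek (z w : ℂ) : ℂ := Complex.exp (-((z - w) * conj (z - w)))

lemma ofReal_norm_sq (a : ℂ) : ((‖a‖ : ℂ) ^ 2) = a * conj a := by
  rw [Complex.mul_conj]
  norm_cast
  rw [Complex.normSq_eq_norm_sq]

lemma Ek_eq (z w : ℂ) : Complex.exp (-((‖z - w‖ : ℂ) ^ 2)) = Ek z w := by
  rw [Ek, ofReal_norm_sq]

lemma norm_Ek (z w : ℂ) : ‖Ek z w‖ = Real.exp (-‖z - w‖ ^ 2) := by
  rw [Ek, ← ofReal_norm_sq]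
  have : (-((‖z - w‖ : ℂ) ^ 2)) = ((-‖z - w‖ ^ 2 : ℝ) : ℂ) := by push_cast; ring
  rw [this, Complex.norm_exp, Complex.ofReal_re]

lemma contEk_w (z : ℂ) : Continuous fun w => Ek z w := by
  unfold Ek
  exact Complex.continuous_exp.comp
    (((continuous_const.sub continuous_id).mul
      (Complex.continuous_conj.comp (continuous_const.sub continuous_id))).neg)

lemma contEk_z (w : ℂ) : Continuous fun z => Ek z w := by
  unfold Ek
  exact Complex.continuous_exp.comp
    (((continuous_id.sub continuous_const).mul
      (Complex.continuous_conj.comp (continuous_id.sub continuous_const))).neg)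

noncomputable def Mker (a : ℂ) : ℂ →L[ℝ] ℂ :=
  a • (Complex.conjCLE : ℂ →L[ℝ] ℂ) + (conj a) • (ContinuousLinearMap.id ℝ ℂ)

lemma Mker_apply (a v : ℂ) : Mker a v = a * conj v + conj a * v := by
  simp [Mker, Complex.conjCLE_apply, smul_eq_mul]

lemma norm_Mker_le (a : ℂ) : ‖Mker a‖ ≤ 2 * ‖a‖ := by
  apply ContinuousLinearMap.opNorm_le_bound _ (by positivity)
  intro v
  rw [Mker_apply]
  calc ‖a * conj v + conj a * v‖ ≤ ‖a * conj v‖ + ‖conj a * v‖ := norm_add_le _ _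
    _ = ‖a‖ * ‖v‖ + ‖a‖ * ‖v‖ := by
        rw [norm_mul, norm_mul, RCLike.norm_conj, RCLike.norm_conj]
    _ = 2 * ‖a‖ * ‖v‖ := by ring

lemma contMker : Continuous Mker := by
  unfold Mker
  exact (continuous_id.smul continuous_const).add
    ((Complex.continuous_conj.smul continuous_const))

lemma hasFDeriv_Ek (w z : ℂ) :
    HasFDerivAt (fun z => Ek z w) (-(Ek z w) • Mker (z - w)) z := by
  have h1 : HasFDerivAt (fun z : ℂ => z - w) (ContinuousLinearMap.id ℝ ℂ) z :=
    (hasFDerivAt_id z).sub_const w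
  have h2 : HasFDerivAt (fun z : ℂ => conj (z - w)) ((Complex.conjCLE : ℂ →L[ℝ] ℂ)) z := by
    have h := ((Complex.conjCLE : ℂ →L[ℝ] ℂ).hasFDerivAt (x := z - w)).comp z h1
    simpa [Function.comp_def, -map_sub] using h
  have h3 : HasFDerivAt (fun z : ℂ => (z - w) * conj (z - w)) (Mker (z - w)) z := by
    have := h1.mul h2
    simpa [Mker, Pi.mul_def] using this
  have h4 := (h3.neg).cexp
  refine h4.congr_fderiv ?_
  simp only [Ek, Pi.neg_apply]
  module


noncomputable def Fd (f : ℂ → ℂ) (z w : ℂ) : ℂ →L[ℝ] ℂ :=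
  (-(Ek z w * f w)) • Mker (z - w)

lemma Fd_apply (f : ℂ → ℂ) (z w v : ℂ) :
    Fd f z w v = -(Ek z w * f w) * ((z - w) * conj v + conj (z - w) * v) := by
  simp [Fd, Mker_apply, smul_eq_mul]

lemma hasFDeriv_kernel (f : ℂ → ℂ) (w z : ℂ) :
    HasFDerivAt (fun z => Ek z w * f w) (Fd f z w) z := by
  have h := (hasFDeriv_Ek w z).mul_const (f w)
  refine h.congr_fderiv ?_
  rw [Fd, smul_smul]
  congr 1
  ring

lemma norm_Fd_le (f : ℂ → ℂ) (z w : ℂ) :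
    ‖Fd f z w‖ ≤ 2 * ‖z - w‖ * (Real.exp (-‖z - w‖ ^ 2) * ‖f w‖) := by
  rw [Fd]
  calc ‖(-(Ek z w * f w)) • Mker (z - w)‖ ≤ ‖-(Ek z w * f w)‖ * ‖Mker (z - w)‖ :=
        ContinuousLinearMap.opNorm_smul_le _ _
    _ = ‖Ek z w * f w‖ * ‖Mker (z - w)‖ := by rw [norm_neg]
    _ ≤ (Real.exp (-‖z - w‖ ^ 2) * ‖f w‖) * (2 * ‖z - w‖) := by
        apply mul_le_mul _ (norm_Mker_le _) (norm_nonneg _) (by positivity)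
        rw [norm_mul, norm_Ek]
    _ = 2 * ‖z - w‖ * (Real.exp (-‖z - w‖ ^ 2) * ‖f w‖) := by ring

lemma contFd (f : ℂ → ℂ) (w : ℂ) : Continuous fun z => Fd f z w := by
  unfold Fd
  exact (((contEk_z w).mul continuous_const).neg).smul
    (contMker.comp (continuous_id.sub continuous_const))

lemma key_growth (R t : ℝ) (hR : 0 ≤ R) (ht : 0 ≤ t) :
    (R + t) ^ 2 * Real.exp (4 * R * t - t ^ 2)
      ≤ (2 * R ^ 2 + 8) * Real.exp (16 * R ^ 2) * Real.exp (-t ^ 2 / 2) := by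
  rw [show 4 * R * t - t ^ 2 = (4 * R * t - t ^ 2 / 2) + (-t ^ 2 / 2) by ring,
    Real.exp_add, ← mul_assoc]
  gcongr ?_ * Real.exp (-t ^ 2 / 2)
  have hA : Real.exp (4 * R * t - t ^ 2 / 2)
      ≤ Real.exp (16 * R ^ 2) * Real.exp (-t ^ 2 / 4) := by
    rw [← Real.exp_add]
    apply Real.exp_le_exp.2
    nlinarith [sq_nonneg (4 * R - t / 2)]
  have h2 : (R + t) ^ 2 ≤ 2 * R ^ 2 + 2 * t ^ 2 := by nlinarith [sq_nonneg (R - t)]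
  have h4 : t ^ 2 * Real.exp (-t ^ 2 / 4) ≤ 4 := by
    have h5 : t ^ 2 ≤ 4 * Real.exp (t ^ 2 / 4) - 4 := by
      nlinarith [Real.add_one_le_exp (t ^ 2 / 4)]
    have hmul : Real.exp (t ^ 2 / 4) * Real.exp (-t ^ 2 / 4) = 1 := by
      rw [← Real.exp_add, show t ^ 2 / 4 + -t ^ 2 / 4 = 0 by ring, Real.exp_zero]
    have hp := Real.exp_pos (-t ^ 2 / 4)
    calc t ^ 2 * Real.exp (-t ^ 2 / 4)
        ≤ (4 * Real.exp (t ^ 2 / 4) - 4) * Real.exp (-t ^ 2 / 4) :=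
          mul_le_mul_of_nonneg_right h5 hp.le
      _ = 4 * (Real.exp (t ^ 2 / 4) * Real.exp (-t ^ 2 / 4)) - 4 * Real.exp (-t ^ 2 / 4) := by
          ring
      _ = 4 - 4 * Real.exp (-t ^ 2 / 4) := by rw [hmul]; ring
      _ ≤ 4 := by linarith
  have hexp1 : Real.exp (-t ^ 2 / 4) ≤ 1 := Real.exp_le_one_iff.2 (by nlinarith)
  calc (R + t) ^ 2 * Real.exp (4 * R * t - t ^ 2 / 2)
      ≤ (2 * R ^ 2 + 2 * t ^ 2) * (Real.exp (16 * R ^ 2) * Real.exp (-t ^ 2 / 4)) :=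
        mul_le_mul h2 hA (Real.exp_pos _).le (by positivity)
    _ = (2 * R ^ 2 * Real.exp (-t ^ 2 / 4) + 2 * (t ^ 2 * Real.exp (-t ^ 2 / 4)))
          * Real.exp (16 * R ^ 2) := by ring
    _ ≤ (2 * R ^ 2 * 1 + 2 * 4) * Real.exp (16 * R ^ 2) := by
        gcongr
    _ = (2 * R ^ 2 + 8) * Real.exp (16 * R ^ 2) := by ring

lemma intGauss : Integrable (fun w : ℂ => Real.exp (-‖w‖ ^ 2 / 2)) volume := by
  have h := (GaussianFourier.integrable_cexp_neg_mul_sq_norm_add (V := ℂ)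
    (b := (1 / 2 : ℂ)) (by norm_num) 0 0).norm
  refine h.congr (Filter.Eventually.of_forall fun v => ?_)
  have hc : (-(1 / 2 : ℂ)) * (‖v‖ : ℂ) ^ 2 + 0 * ((inner ℝ (0 : ℂ) v : ℝ) : ℂ)
      = ((-‖v‖ ^ 2 / 2 : ℝ) : ℂ) := by push_cast; ring
  show ‖Complex.exp _‖ = _
  rw [hc, Complex.norm_exp, Complex.ofReal_re]

section
variable {f : ℂ → ℂ}

lemma density_meas :
    Measurable fun w : ℂ => ENNReal.ofReal (Real.exp (-‖w‖ ^ 2) / Real.pi) := by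
  apply ENNReal.measurable_ofReal.comp
  fun_prop

lemma aux_meas (hf : MemLp f 2 gaussianMeasure) : AEStronglyMeasurable f volume := by
  have habs : volume ≪ gaussianMeasure := by
    apply withDensity_absolutelyContinuous' density_meas.aemeasurable
    refine Filter.Eventually.of_forall fun w => ?_
    simp only [ne_eq, ENNReal.ofReal_eq_zero, not_le]
    positivity
  exact hf.1.mono_ac habs

lemma aux_L2 (hf : MemLp f 2 gaussianMeasure) :
    MemLp (fun w : ℂ => ‖f w‖ * Real.exp (-‖w‖ ^ 2 / 2)) 2 volume := by
  have hfm := aux_meas hf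
  have hm : AEStronglyMeasurable (fun w : ℂ => ‖f w‖ * Real.exp (-‖w‖ ^ 2 / 2)) volume := by
    exact hfm.norm.mul (Continuous.aestronglyMeasurable (by fun_prop))
  rw [memLp_two_iff_integrable_sq hm]
  have h1 : Integrable (fun w => ‖f w‖ ^ (2 : ℝ)) gaussianMeasure :=
    hf.integrable_norm_rpow (by norm_num) (by norm_num)
  rw [gaussianMeasure, integrable_withDensity_iff density_meas
    (Filter.Eventually.of_forall fun w => ENNReal.ofReal_lt_top)] at h1
  have h2 := h1.const_mul Real.pi
  refine h2.congr (Filter.Eventually.of_forall fun w => ?_)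
  have ht : (ENNReal.ofReal (Real.exp (-‖w‖ ^ 2) / Real.pi)).toReal
      = Real.exp (-‖w‖ ^ 2) / Real.pi := ENNReal.toReal_ofReal (by positivity)
  simp only [ht]
  rw [mul_pow, sq (Real.exp (-‖w‖ ^ 2 / 2)), ← Real.exp_add,
    show -‖w‖ ^ 2 / 2 + -‖w‖ ^ 2 / 2 = -‖w‖ ^ 2 by ring]
  field_simp
  rw [Real.rpow_two]



lemma integrable_dom (hf : MemLp f 2 gaussianMeasure) (R : ℝ) (hR : 0 ≤ R) :
    Integrable (fun w : ℂ =>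
      (R + 1 + ‖w‖) * Real.exp (2 * R * ‖w‖ - ‖w‖ ^ 2) * ‖f w‖) volume := by
  have hfm := aux_meas hf
  have hL2 := aux_L2 hf
  set u : ℂ → ℝ := fun w => (R + 1 + ‖w‖) * Real.exp (2 * R * ‖w‖ - ‖w‖ ^ 2 / 2) with hu_def
  have hu : MemLp u 2 volume := by
    have hum : AEStronglyMeasurable u volume :=
      Continuous.aestronglyMeasurable (by fun_prop)
    rw [memLp_two_iff_integrable_sq hum]
    have hbd : ∀ w : ℂ, u w ^ 2
        ≤ ((2 * (R + 1) ^ 2 + 8) * Real.exp (16 * (R + 1) ^ 2))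
          * Real.exp (-‖w‖ ^ 2 / 2) := by
      intro w
      have hkey := key_growth (R + 1) ‖w‖ (by linarith) (norm_nonneg w)
      have e1 : u w ^ 2 = (R + 1 + ‖w‖) ^ 2 * Real.exp (4 * R * ‖w‖ - ‖w‖ ^ 2) := by
        rw [hu_def]
        rw [mul_pow, sq (Real.exp (2 * R * ‖w‖ - ‖w‖ ^ 2 / 2)), ← Real.exp_add]
        congr 2
        ring
      rw [e1]
      calc (R + 1 + ‖w‖) ^ 2 * Real.exp (4 * R * ‖w‖ - ‖w‖ ^ 2)
          ≤ (R + 1 + ‖w‖) ^ 2 * Real.exp (4 * (R + 1) * ‖w‖ - ‖w‖ ^ 2) :=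
            mul_le_mul_of_nonneg_left
              (Real.exp_le_exp.2 (by nlinarith [norm_nonneg w])) (sq_nonneg _)
        _ ≤ _ := by
            have := key_growth (R + 1) ‖w‖ (by linarith) (norm_nonneg w)
            calc (R + 1 + ‖w‖) ^ 2 * Real.exp (4 * (R + 1) * ‖w‖ - ‖w‖ ^ 2)
                = ((R + 1) + ‖w‖) ^ 2 * Real.exp (4 * (R + 1) * ‖w‖ - ‖w‖ ^ 2) := by ring_nf
              _ ≤ (2 * (R + 1) ^ 2 + 8) * Real.exp (16 * (R + 1) ^ 2)
                    * Real.exp (-‖w‖ ^ 2 / 2) := this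
    have hint : Integrable (fun w : ℂ =>
        ((2 * (R + 1) ^ 2 + 8) * Real.exp (16 * (R + 1) ^ 2))
          * Real.exp (-‖w‖ ^ 2 / 2)) volume := intGauss.const_mul _
    have hsm : AEStronglyMeasurable (fun x : ℂ => u x ^ 2) volume := by
      have h := hum.mul hum
      exact h.congr (Filter.Eventually.of_forall fun w => (sq (u w)).symm)
    refine hint.mono' hsm (Filter.Eventually.of_forall fun w => ?_)
    rw [Real.norm_of_nonneg (sq_nonneg _)]
    exact hbd w
  have hprod : Integrable (fun w : ℂ =>
      u w * (‖f w‖ * Real.exp (-‖w‖ ^ 2 / 2))) volume := by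
    have h := hL2.smul (φ := u) hu (r := 1)
    rw [memLp_one_iff_integrable] at h
    exact h.congr (Filter.Eventually.of_forall fun w => rfl)
  refine hprod.congr (Filter.Eventually.of_forall fun w => ?_)
  rw [hu_def]
  show (R + 1 + ‖w‖) * Real.exp (2 * R * ‖w‖ - ‖w‖ ^ 2 / 2)
      * (‖f w‖ * Real.exp (-‖w‖ ^ 2 / 2))
    = (R + 1 + ‖w‖) * Real.exp (2 * R * ‖w‖ - ‖w‖ ^ 2) * ‖f w‖
  rw [show (R + 1 + ‖w‖) * Real.exp (2 * R * ‖w‖ - ‖w‖ ^ 2 / 2)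
      * (‖f w‖ * Real.exp (-‖w‖ ^ 2 / 2))
    = (R + 1 + ‖w‖) * (Real.exp (2 * R * ‖w‖ - ‖w‖ ^ 2 / 2)
      * Real.exp (-‖w‖ ^ 2 / 2)) * ‖f w‖ by ring, ← Real.exp_add]
  congr 3
  ring

lemma sq_kernel_bound {z w : ℂ} {R : ℝ} (hz : ‖z‖ ≤ R) :
    -‖z - w‖ ^ 2 ≤ 2 * R * ‖w‖ - ‖w‖ ^ 2 := by
  have h1 : ‖w‖ ≤ ‖z - w‖ + R := by
    have : w = z - (z - w) := by ring
    calc ‖w‖ = ‖z - (z - w)‖ := by rw [← this]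
      _ ≤ ‖z‖ + ‖z - w‖ := norm_sub_le _ _
      _ ≤ ‖z - w‖ + R := by linarith
  have hR : 0 ≤ R := le_trans (norm_nonneg z) hz
  rcases le_or_gt ‖w‖ (2 * R) with h | h
  · nlinarith [norm_nonneg w, sq_nonneg (‖z - w‖)]
  · nlinarith [norm_nonneg w, norm_nonneg (z - w)]

lemma exp_kernel_bound {z w : ℂ} {R : ℝ} (hz : ‖z‖ ≤ R) :
    Real.exp (-‖z - w‖ ^ 2) ≤ Real.exp (2 * R * ‖w‖ - ‖w‖ ^ 2) :=
  Real.exp_le_exp.2 (sq_kernel_bound hz)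


lemma int_mul_kernel (hf : MemLp f 2 gaussianMeasure) (z : ℂ) (g : ℂ → ℂ)
    (hg : AEStronglyMeasurable g volume) (hgb : ∀ w, ‖g w‖ ≤ 1 + ‖w‖) :
    Integrable (fun w => Ek z w * (g w * f w)) volume := by
  have hfm := aux_meas hf
  refine (integrable_dom hf ‖z‖ (norm_nonneg z)).mono' ?_
    (Filter.Eventually.of_forall fun w => ?_)
  · exact (Continuous.aestronglyMeasurable (contEk_w z)).mul (hg.mul hfm)
  · rw [norm_mul, norm_mul, norm_Ek]
    calc Real.exp (-‖z - w‖ ^ 2) * (‖g w‖ * ‖f w‖)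
        ≤ Real.exp (2 * ‖z‖ * ‖w‖ - ‖w‖ ^ 2) * ((1 + ‖w‖) * ‖f w‖) := by
          gcongr
          · exact sq_kernel_bound le_rfl
          · exact hgb w
      _ = (1 + ‖w‖) * Real.exp (2 * ‖z‖ * ‖w‖ - ‖w‖ ^ 2) * ‖f w‖ := by ring
      _ ≤ (‖z‖ + 1 + ‖w‖) * Real.exp (2 * ‖z‖ * ‖w‖ - ‖w‖ ^ 2) * ‖f w‖ := by
          gcongr
          linarith [norm_nonneg z]

lemma int_kernel0 (hf : MemLp f 2 gaussianMeasure) (z : ℂ) :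
    Integrable (fun w => Ek z w * f w) volume := by
  refine (int_mul_kernel hf z (fun _ => 1)
    aestronglyMeasurable_const (fun w => by simp [norm_nonneg])).congr
    (Filter.Eventually.of_forall fun w => by simp)

lemma int_kernel_conj (hf : MemLp f 2 gaussianMeasure) (z : ℂ) :
    Integrable (fun w => Ek z w * (conj w * f w)) volume :=
  int_mul_kernel hf z (fun w => conj w)
    (Continuous.aestronglyMeasurable continuous_star)
    (fun w => by rw [RCLike.norm_conj]; linarith [norm_nonneg w])

lemma int_kernel_id (hf : MemLp f 2 gaussianMeasure) (z : ℂ) :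
    Integrable (fun w => Ek z w * (w * f w)) volume :=
  int_mul_kernel hf z (fun w => w)
    (Continuous.aestronglyMeasurable continuous_id)
    (fun w => by linarith [norm_nonneg w])

lemma norm_Fd_le' (hfm : AEStronglyMeasurable f volume) {z : ℂ} {R : ℝ} (hzR : ‖z‖ ≤ R)
    (w : ℂ) :
    ‖Fd f z w‖ ≤ 2 * ((R + 1 + ‖w‖) * Real.exp (2 * R * ‖w‖ - ‖w‖ ^ 2) * ‖f w‖) := by
  calc ‖Fd f z w‖ ≤ 2 * ‖z - w‖ * (Real.exp (-‖z - w‖ ^ 2) * ‖f w‖) := norm_Fd_le f z w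
    _ ≤ 2 * (R + 1 + ‖w‖) * (Real.exp (2 * R * ‖w‖ - ‖w‖ ^ 2) * ‖f w‖) := by
        have h1 : ‖z - w‖ ≤ R + 1 + ‖w‖ := by
          calc ‖z - w‖ ≤ ‖z‖ + ‖w‖ := norm_sub_le _ _
            _ ≤ R + 1 + ‖w‖ := by linarith
        have h2 : Real.exp (-‖z - w‖ ^ 2) ≤ Real.exp (2 * R * ‖w‖ - ‖w‖ ^ 2) :=
          exp_kernel_bound hzR
        exact mul_le_mul (by linarith [norm_nonneg (z - w)])
          (mul_le_mul_of_nonneg_right h2 (norm_nonneg _)) (by positivity)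
          (by have hR : 0 ≤ R := le_trans (norm_nonneg z) hzR; positivity)
    _ = 2 * ((R + 1 + ‖w‖) * Real.exp (2 * R * ‖w‖ - ‖w‖ ^ 2) * ‖f w‖) := by ring

lemma aesm_Fd (hfm : AEStronglyMeasurable f volume) (z : ℂ) :
    AEStronglyMeasurable (fun w => Fd f z w) volume := by
  have hc : Continuous fun w : ℂ => Mker (z - w) :=
    contMker.comp (continuous_const.sub continuous_id)
  exact (((Continuous.aestronglyMeasurable (contEk_w z)).mul hfm).neg).smul
    hc.aestronglyMeasurable

lemma int_Fd (hf : MemLp f 2 gaussianMeasure) {z : ℂ} {R : ℝ} (hzR : ‖z‖ ≤ R) :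
    Integrable (fun w => Fd f z w) volume := by
  have hfm := aux_meas hf
  have hR : 0 ≤ R := le_trans (norm_nonneg z) hzR
  exact ((integrable_dom hf R hR).const_mul 2).mono' (aesm_Fd hfm z)
    (Filter.Eventually.of_forall fun w => norm_Fd_le' hfm hzR w)

lemma hasFDeriv_G (hf : MemLp f 2 gaussianMeasure) (z : ℂ) :
    HasFDerivAt (fun z => ∫ w, Ek z w * f w) (∫ w, Fd f z w) z := by
  have hfm := aux_meas hf
  set R := ‖z‖ + 1 with hR_def
  have hR : 0 ≤ R := by positivity
  apply hasFDerivAt_integral_of_dominated_of_fderiv_le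
    (F' := fun z w => Fd f z w)
    (bound := fun w => 2 * ((R + 1 + ‖w‖) * Real.exp (2 * R * ‖w‖ - ‖w‖ ^ 2) * ‖f w‖))
    (s := ball z 1) (ball_mem_nhds z one_pos)
  · exact Filter.Eventually.of_forall fun x =>
      (Continuous.aestronglyMeasurable (contEk_w x)).mul hfm
  · exact int_kernel0 hf z
  · exact aesm_Fd hfm z
  · refine Filter.Eventually.of_forall fun w => fun x hx => ?_
    have hxR : ‖x‖ ≤ R := by
      have := mem_ball_iff_norm.1 hx
      calc ‖x‖ = ‖z + (x - z)‖ := by ring_nf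
        _ ≤ ‖z‖ + ‖x - z‖ := norm_add_le _ _
        _ ≤ R := by rw [hR_def]; linarith
    exact norm_Fd_le' hfm hxR w
  · exact (integrable_dom hf R hR).const_mul 2
  · exact Filter.Eventually.of_forall fun w => fun x _ => hasFDeriv_kernel f w x

lemma cont_int_Fd (hf : MemLp f 2 gaussianMeasure) :
    Continuous fun z => ∫ w, Fd f z w := by
  have hfm := aux_meas hf
  rw [continuous_iff_continuousAt]
  intro z₀
  set R := ‖z₀‖ + 1 with hR_def
  have hR : 0 ≤ R := by positivity
  apply continuousAt_of_dominated
    (bound := fun w => 2 * ((R + 1 + ‖w‖) * Real.exp (2 * R * ‖w‖ - ‖w‖ ^ 2) * ‖f w‖))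
  · exact Filter.Eventually.of_forall fun x => aesm_Fd hfm x
  · refine Filter.eventually_iff_exists_mem.2 ⟨ball z₀ 1, ball_mem_nhds z₀ one_pos, ?_⟩
    intro x hx
    refine Filter.Eventually.of_forall fun w => ?_
    have hxR : ‖x‖ ≤ R := by
      have := mem_ball_iff_norm.1 hx
      calc ‖x‖ = ‖z₀ + (x - z₀)‖ := by ring_nf
        _ ≤ ‖z₀‖ + ‖x - z₀‖ := norm_add_le _ _
        _ ≤ R := by rw [hR_def]; linarith
    exact norm_Fd_le' hfm hxR w
  · exact (integrable_dom hf R hR).const_mul 2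
  · exact Filter.Eventually.of_forall fun w => (contFd f w).continuousAt

end

section
variable {f : ℂ → ℂ}

lemma hasFDeriv_ber (hf : MemLp f 2 gaussianMeasure) (z : ℂ) :
    HasFDerivAt (berezin f) ((1 / (Real.pi : ℂ)) • ∫ w, Fd f z w) z := by
  have hb : berezin f = fun z => (1 / (Real.pi : ℂ)) * ∫ w, Ek z w * f w := by
    funext z
    simp only [berezin, Ek_eq]
  rw [hb]
  exact (hasFDeriv_G hf z).const_mul _

end

end BerezinAux

open Metric in
/-- If `f : ℂ → ℂ` is square integrable for the Gaussian measure, then `B(f)` is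
continuously differentiable (in the real coordinates), for every `z` the integrals
defining `B(conj w·f)(z)` and `B(w·f)(z)` converge absolutely, and
`∂/∂z B(f)(z) = B(conj w·f)(z) − conj z·B(f)(z)` and
`∂/∂conj z B(f)(z) = B(w·f)(z) − z·B(f)(z)`. -/
theorem wirtingerDeriv_berezin (f : ℂ → ℂ) (hf : MemLp f 2 gaussianMeasure) :
    ContDiff ℝ 1 (berezin f) ∧
    (∀ z : ℂ,
      Integrable
        (fun w : ℂ => Complex.exp (-((‖z - w‖ : ℂ) ^ 2)) * (conj w * f w)) volume ∧
      Integrable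
        (fun w : ℂ => Complex.exp (-((‖z - w‖ : ℂ) ^ 2)) * (w * f w)) volume) ∧
    (∀ z : ℂ,
      wirtingerDeriv (berezin f) z
          = berezin (fun w => conj w * f w) z - conj z * berezin f z ∧
      wirtingerDerivBar (berezin f) z
          = berezin (fun w => w * f w) z - z * berezin f z) := by

  refine ⟨?_, fun z => ⟨?_, ?_⟩, fun z => ?_⟩
  · rw [contDiff_one_iff_fderiv]
    refine ⟨fun z => (hasFDeriv_ber hf z).differentiableAt, ?_⟩
    have hfd : (fderiv ℝ (berezin f)) = fun z => (1 / (Real.pi : ℂ)) • ∫ w, Fd f z w :=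
      funext fun z => (hasFDeriv_ber hf z).fderiv
    rw [hfd]
    exact (cont_int_Fd hf).const_smul (1 / (Real.pi : ℂ))
  · exact (int_kernel_conj hf z).congr
      (Filter.Eventually.of_forall fun w => by simp only [Ek_eq])
  · exact (int_kernel_id hf z).congr
      (Filter.Eventually.of_forall fun w => by simp only [Ek_eq])
  · have hfd := (hasFDeriv_ber hf z).fderiv
    have hint : Integrable (fun w => Fd f z w) volume := int_Fd hf (le_refl ‖z‖)
    have hev : ∀ v : ℂ, Integrable (fun w => Fd f z w v) volume := fun v =>
      (ContinuousLinearMap.apply ℝ ℂ v).integrable_comp hint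
    have happ : ∀ v : ℂ, fderiv ℝ (berezin f) z v
        = (1 / (Real.pi : ℂ)) * ∫ w, Fd f z w v := by
      intro v
      rw [hfd, ContinuousLinearMap.smul_apply,
        ContinuousLinearMap.integral_apply hint, smul_eq_mul]
    have hb0 : berezin f z = (1 / (Real.pi : ℂ)) * ∫ w, Ek z w * f w := by
      simp only [berezin, Ek_eq]
    constructor
    · have hcomb : ∀ w, Fd f z w 1 - Complex.I * Fd f z w Complex.I
          = 2 * (Ek z w * (conj w * f w) - conj z * (Ek z w * f w)) := by
        intro w
        rw [Fd_apply, Fd_apply, map_sub, Complex.conj_I, map_one]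
        linear_combination (Ek z w * f w * ((conj z - conj w) - (z - w))) * Complex.I_sq
      have hintegral : (∫ w, Fd f z w 1) - Complex.I * ∫ w, Fd f z w Complex.I
          = 2 * ((∫ w, Ek z w * (conj w * f w)) - conj z * ∫ w, Ek z w * f w) := by
        calc (∫ w, Fd f z w 1) - Complex.I * ∫ w, Fd f z w Complex.I
            = ∫ w, (Fd f z w 1 - Complex.I * Fd f z w Complex.I) := by
              rw [← integral_const_mul,
                ← integral_sub (hev 1) ((hev Complex.I).const_mul _)]
          _ = ∫ w, 2 * (Ek z w * (conj w * f w) - conj z * (Ek z w * f w)) :=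
              integral_congr_ae (Filter.Eventually.of_forall fun w => hcomb w)
          _ = 2 * ((∫ w, Ek z w * (conj w * f w)) - conj z * ∫ w, Ek z w * f w) := by
              rw [integral_const_mul,
                integral_sub (int_kernel_conj hf z) ((int_kernel0 hf z).const_mul _),
                integral_const_mul]
      have hb1 : berezin (fun w => conj w * f w) z
          = (1 / (Real.pi : ℂ)) * ∫ w, Ek z w * (conj w * f w) := by
        simp only [berezin, Ek_eq]
      rw [wirtingerDeriv, happ 1, happ Complex.I, hb1, hb0]
      linear_combination (1 / (Real.pi : ℂ)) / 2 * hintegral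
    · have hcomb : ∀ w, Fd f z w 1 + Complex.I * Fd f z w Complex.I
          = 2 * (Ek z w * (w * f w) - z * (Ek z w * f w)) := by
        intro w
        rw [Fd_apply, Fd_apply, map_sub, Complex.conj_I, map_one]
        linear_combination (Ek z w * f w * ((z - w) - (conj z - conj w))) * Complex.I_sq
      have hintegral : (∫ w, Fd f z w 1) + Complex.I * ∫ w, Fd f z w Complex.I
          = 2 * ((∫ w, Ek z w * (w * f w)) - z * ∫ w, Ek z w * f w) := by
        calc (∫ w, Fd f z w 1) + Complex.I * ∫ w, Fd f z w Complex.I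
            = ∫ w, (Fd f z w 1 + Complex.I * Fd f z w Complex.I) := by
              rw [← integral_const_mul,
                ← integral_add (hev 1) ((hev Complex.I).const_mul _)]
          _ = ∫ w, 2 * (Ek z w * (w * f w) - z * (Ek z w * f w)) :=
              integral_congr_ae (Filter.Eventually.of_forall fun w => hcomb w)
          _ = 2 * ((∫ w, Ek z w * (w * f w)) - z * ∫ w, Ek z w * f w) := by
              rw [integral_const_mul,
                integral_sub (int_kernel_id hf z) ((int_kernel0 hf z).const_mul _),
                integral_const_mul]
      have hb1 : berezin (fun w => w * f w) z
          = (1 / (Real.pi : ℂ)) * ∫ w, Ek z w * (w * f w) := by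
        simp only [berezin, Ek_eq]
      rw [wirtingerDerivBar, happ 1, happ Complex.I, hb1, hb0]
      linear_combination (1 / (Real.pi : ℂ)) / 2 * hintegral
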